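/- For g ≥ 3, the abelianization of G_C(g) is isomorphic to Z/2 ⊕ Z/2 if g is odd, and to Z/2 ⊕ Z/2 ⊕ Z/2 if g is even. Moreover, for g odd the abelianization is generated by the images of t_1 and s, and for g even by the images of t_1, s and ρ. -/

import Mathlib

open FreeGroup in
/-- Relations (C1)-(C8). The generator `Sum.inl i` is `t_{i+1}`, `Sum.inr false` is `s`,
and `Sum.inr true` is `ρ`. -/
def relsC (g : ℕ) : Set (FreeGroup (Fin (g-1) ⊕ Bool)) :=
  -- (C1)
  {r | ∃ j k : Fin (g-1), ((j : ℕ) + 1 < k ∨ (k : ℕ) + 1 < j) ∧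
        r = of (.inl k) * of (.inl j) * (of (.inl j) * of (.inl k))⁻¹} ∪
  -- (C2)
  {r | ∃ j k : Fin (g-1), (j : ℕ) + 1 = k ∧
        r = of (.inl j) * of (.inl k) * of (.inl j) *
            (of (.inl k) * of (.inl j) * of (.inl k))⁻¹} ∪
  -- (C3)
  {(List.ofFn (fun i : Fin (g-1) => of (Sum.inl i : Fin (g-1) ⊕ Bool))).prod ^ g *
      (if Odd g then (of (Sum.inr true : Fin (g-1) ⊕ Bool))⁻¹ else 1)} ∪
  -- (C4)
  {of (Sum.inr false : Fin (g-1) ⊕ Bool) ^ 2} ∪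
  -- (C5)  s t_j s = t_j⁻¹
  {r | ∃ j : Fin (g-1),
        r = of (.inr false) * of (.inl j) * of (.inr false) * of (.inl j)} ∪
  -- (C6)
  {of (Sum.inr true : Fin (g-1) ⊕ Bool) ^ 2} ∪
  -- (C7)  ρ t_j ρ = t_j
  {r | ∃ j : Fin (g-1),
        r = of (.inr true) * of (.inl j) * of (.inr true) * (of (.inl j))⁻¹} ∪
  -- (C8)  ρ s ρ = s
  {of (Sum.inr true : Fin (g-1) ⊕ Bool) * of (.inr false) * of (.inr true) *
      (of (.inr false))⁻¹}

/-- `G_C(g)`, a presentation of the hyperelliptic mapping class group `M^h(N_g)`. -/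
def GC (g : ℕ) : Type := PresentedGroup (relsC g)

instance (g : ℕ) : Group (GC g) := by unfold GC; infer_instance

/-- The generator `t_{i+1}` of `G_C(g)`. -/
def GC.t {g : ℕ} (i : Fin (g-1)) : GC g := PresentedGroup.of (rels := relsC g) (Sum.inl i)

/-- The generator `s` of `G_C(g)`. -/
def GC.s (g : ℕ) : GC g := PresentedGroup.of (rels := relsC g) (Sum.inr false)

/-- The generator `ρ` of `G_C(g)`. -/
def GC.ρ (g : ℕ) : GC g := PresentedGroup.of (rels := relsC g) (Sum.inr true)

namespace GCaux

open FreeGroup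

/-- quotient map to the abelianization -/
def piA (g : ℕ) : FreeGroup (Fin (g-1) ⊕ Bool) →* Abelianization (GC g) :=
  (Abelianization.of (G := GC g)).comp (PresentedGroup.mk (relsC g))

lemma piA_rel {g : ℕ} {r} (hr : r ∈ relsC g) : piA g r = 1 := by
  have h : PresentedGroup.mk (relsC g) r = 1 :=
    (QuotientGroup.eq_one_iff r).mpr (Subgroup.subset_normalClosure hr)
  show Abelianization.of (PresentedGroup.mk (relsC g) r) = 1
  rw [h]
  exact _root_.map_one Abelianization.of

lemma piA_t {g : ℕ} (i : Fin (g-1)) :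
    piA g (of (Sum.inl i)) = Abelianization.of (GC.t i) := rfl

lemma piA_s {g : ℕ} :
    piA g (of (Sum.inr false)) = Abelianization.of (GC.s g) := rfl

lemma piA_ρ {g : ℕ} :
    piA g (of (Sum.inr true)) = Abelianization.of (GC.ρ g) := rfl

lemma pow_pred_mul_self {M : Type*} [Monoid M] {x : M} (hx : x ^ 2 = 1) (g : ℕ) :
    (x ^ (g-1)) ^ g = 1 := by
  obtain ⟨k, hk⟩ := Nat.even_mul_pred_self g
  rw [← pow_mul, mul_comm, hk, ← two_mul, pow_mul, hx, one_pow]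

variable {g : ℕ}

lemma s_sq : (Abelianization.of (GC.s g)) ^ 2 = 1 := by
  have h := piA_rel (g := g) (r := of (Sum.inr false) ^ 2) (by
    unfold relsC
    exact Set.mem_union_left _ (Set.mem_union_left _ (Set.mem_union_left _
      (Set.mem_union_left _ (Set.mem_union_right _ (Set.mem_singleton _))))))
  rw [_root_.map_pow, piA_s] at h
  exact h

lemma ρ_sq : (Abelianization.of (GC.ρ g)) ^ 2 = 1 := by
  have h := piA_rel (g := g) (r := of (Sum.inr true) ^ 2) (by
    unfold relsC
    exact Set.mem_union_left _ (Set.mem_union_left _ (Set.mem_union_right _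
      (Set.mem_singleton _))))
  rw [_root_.map_pow, piA_ρ] at h
  exact h

lemma t_sq (j : Fin (g-1)) : (Abelianization.of (GC.t j)) ^ 2 = 1 := by
  set a := Abelianization.of (GC.t j) with ha
  set b := Abelianization.of (GC.s g) with hb
  have h : b * a * b * a = 1 := by
    have h := piA_rel (g := g)
      (r := of (.inr false) * of (.inl j) * of (.inr false) * of (.inl j)) (by
      unfold relsC
      exact Set.mem_union_left _ (Set.mem_union_left _ (Set.mem_union_left _
        (Set.mem_union_right _ ⟨j, rfl⟩))))
    simpa [_root_.map_mul, piA_t, piA_s, ← ha, ← hb] using h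
  have h2 : b ^ 2 * a ^ 2 = 1 := by
    rw [pow_two, pow_two]
    calc b * b * (a * a) = b * a * (b * a) := mul_mul_mul_comm b b a a
    _ = b * a * b * a := by rw [← mul_assoc]
    _ = 1 := h
  rwa [s_sq, one_mul] at h2

lemma t_braid {j k : Fin (g-1)} (h : (j : ℕ) + 1 = k) :
    Abelianization.of (GC.t j) = Abelianization.of (GC.t k) := by
  set a := Abelianization.of (GC.t j) with ha
  set b := Abelianization.of (GC.t k) with hb
  have h1 : a * b * a * (b * a * b)⁻¹ = 1 := by
    have h1 := piA_rel (g := g)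
      (r := of (.inl j) * of (.inl k) * of (.inl j) *
            (of (.inl k) * of (.inl j) * of (.inl k))⁻¹) (by
      unfold relsC
      exact Set.mem_union_left _ (Set.mem_union_left _ (Set.mem_union_left _
        (Set.mem_union_left _ (Set.mem_union_left _ (Set.mem_union_left _
          (Set.mem_union_right _ ⟨j, k, h, rfl⟩)))))))
    simpa [_root_.map_mul, _root_.map_inv, piA_t, ← ha, ← hb] using h1
  have h2 : a * b * a = b * a * b := by rwa [mul_inv_eq_one] at h1
  have h3 : a * (b * a) = b * (b * a) := by
    rw [← mul_assoc, h2, mul_assoc, mul_comm a b]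
  exact mul_right_cancel h3

lemma t_eq (hg : 3 ≤ g) (j : Fin (g-1)) :
    Abelianization.of (GC.t j) = Abelianization.of (GC.t (⟨0, Nat.sub_pos_of_lt (by omega)⟩ : Fin (g-1))) := by
  obtain ⟨n, hn⟩ := j
  induction n with
  | zero => rfl
  | succ m ih =>
    have hm : m < g - 1 := by omega
    have := t_braid (g := g) (j := ⟨m, hm⟩) (k := ⟨m+1, hn⟩) rfl
    rw [← this]
    exact ih hm

lemma c3 (hg : 3 ≤ g) :
    (if Odd g then (Abelianization.of (GC.ρ g))⁻¹ else 1) = 1 := by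
  set a := Abelianization.of (GC.t (⟨0, Nat.sub_pos_of_lt (by omega)⟩ : Fin (g-1))) with ha
  have h := piA_rel (g := g)
    (r := (List.ofFn (fun i : Fin (g-1) => of (Sum.inl i : Fin (g-1) ⊕ Bool))).prod ^ g *
      (if Odd g then (of (Sum.inr true : Fin (g-1) ⊕ Bool))⁻¹ else 1)) (by
    unfold relsC
    exact Set.mem_union_left _ (Set.mem_union_left _ (Set.mem_union_left _
      (Set.mem_union_left _ (Set.mem_union_left _ (Set.mem_union_right _
        (Set.mem_singleton _)))))))
  rw [_root_.map_mul, _root_.map_pow, map_list_prod, List.map_ofFn] at h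
  have hP : (List.ofFn ((piA g) ∘ fun i : Fin (g-1) => of (Sum.inl i))).prod = a ^ (g-1) := by
    rw [List.prod_eq_pow_card _ a, List.length_ofFn]
    intro x hx
    rw [List.mem_ofFn] at hx
    obtain ⟨i, rfl⟩ := hx
    show piA g (of (Sum.inl i)) = a
    rw [piA_t, t_eq hg]
  rw [hP, pow_pred_mul_self (t_sq _), one_mul] at h
  rw [apply_ite (piA g), _root_.map_inv, piA_ρ, _root_.map_one] at h
  exact h

lemma ρ_one (hg : 3 ≤ g) (hodd : Odd g) : Abelianization.of (GC.ρ g) = 1 := by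
  have h := c3 (g := g) hg
  rw [if_pos hodd, inv_eq_one] at h
  exact h



lemma gen_aux (hg : 3 ≤ g) (S : Set (Abelianization (GC g)))
    (ht : Abelianization.of (GC.t (⟨0, Nat.sub_pos_of_lt (by omega)⟩ : Fin (g-1))) ∈ S)
    (hs : Abelianization.of (GC.s g) ∈ S)
    (hρ : Abelianization.of (GC.ρ g) ∈ Subgroup.closure S) :
    Subgroup.closure S = ⊤ := by
  rw [eq_top_iff]
  rintro x -
  have key : ∀ y : GC g, Abelianization.of y ∈ Subgroup.closure S := by
    intro y
    refine PresentedGroup.generated_by (relsC g)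
      ((Subgroup.closure S).comap (Abelianization.of (G := GC g))) ?_ y
    rintro (i | b)
    · show Abelianization.of (GC.t i) ∈ Subgroup.closure S
      rw [t_eq hg]
      exact Subgroup.subset_closure ht
    · cases b
      · exact Subgroup.subset_closure hs
      · exact hρ
  refine QuotientGroup.induction_on x ?_
  intro z
  exact key z



section Homs

variable {A : Type*} [CommGroup A]

/-- hom from `ZMod 2` hitting an element of order dividing 2 -/
def zmodHom (x : A) (hx : x ^ 2 = 1) : ZMod 2 →+ Additive A :=
  ZMod.lift 2 ⟨zmultiplesHom (Additive A) (Additive.ofMul x), by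
    show ((2:ℕ) : ℤ) • Additive.ofMul x = 0
    rw [natCast_zsmul, ← ofMul_pow, hx, ofMul_one]⟩

@[simp] lemma zmodHom_zero (x : A) (hx : x ^ 2 = 1) : zmodHom x hx 0 = 0 := map_zero _

@[simp] lemma zmodHom_one (x : A) (hx : x ^ 2 = 1) :
    zmodHom x hx 1 = Additive.ofMul x := by
  rw [show (1 : ZMod 2) = ((1:ℤ) : ZMod 2) by norm_cast]
  rw [zmodHom, ZMod.lift_coe]
  simp

/-- generic generator assignment -/
def fgen {M : Type*} (x y z : M) : Fin (g-1) ⊕ Bool → M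
  | .inl _ => x
  | .inr false => y
  | .inr true => z

lemma lift_rels {M : Type*} [CommGroup M] {x y z : M}
    (hx : x ^ 2 = 1) (hy : y ^ 2 = 1) (hz : z ^ 2 = 1) (hoz : Odd g → z = 1) :
    ∀ r ∈ relsC g, FreeGroup.lift (fgen (g := g) x y z) r = 1 := by
  have hx' : x * x = 1 := by rw [← pow_two]; exact hx
  have hy' : y * y = 1 := by rw [← pow_two]; exact hy
  have hz' : z * z = 1 := by rw [← pow_two]; exact hz
  intro r hr
  unfold relsC at hr
  simp only [Set.mem_union, Set.mem_setOf_eq, Set.mem_singleton_iff] at hr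
  obtain ((((((⟨j,k,-,rfl⟩ | ⟨j,k,-,rfl⟩) | rfl) | rfl) | ⟨j,rfl⟩) | rfl) | ⟨j,rfl⟩) | rfl := hr
  · simp only [_root_.map_mul, _root_.map_inv, FreeGroup.lift_apply_of, fgen]; group
  · simp only [_root_.map_mul, _root_.map_inv, FreeGroup.lift_apply_of, fgen]; group
  · rw [_root_.map_mul, _root_.map_pow, map_list_prod, List.map_ofFn]
    have hP : (List.ofFn ((FreeGroup.lift (fgen (g := g) x y z)) ∘
        fun i : Fin (g-1) => FreeGroup.of (Sum.inl i))).prod = x ^ (g-1) := by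
      rw [List.prod_eq_pow_card _ x, List.length_ofFn]
      intro w hw
      rw [List.mem_ofFn] at hw
      obtain ⟨i, rfl⟩ := hw
      simp [fgen]
    rw [hP, pow_pred_mul_self hx, one_mul, apply_ite (FreeGroup.lift (fgen (g := g) x y z))]
    by_cases hodd : Odd g
    · rw [if_pos hodd, _root_.map_inv]
      simp [fgen, hoz hodd]
    · rw [if_neg hodd, _root_.map_one]
  · simp [fgen, hy]
  · simp only [_root_.map_mul, FreeGroup.lift_apply_of, fgen]
    calc y * x * y * x = y * x * (y * x) := mul_assoc _ _ _
      _ = y * y * (x * x) := mul_mul_mul_comm _ _ _ _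
      _ = 1 := by rw [hx', hy', one_mul]
  · simp [fgen, hz]
  · simp only [_root_.map_mul, _root_.map_inv, FreeGroup.lift_apply_of, fgen]
    calc z * x * z * x⁻¹ = z * x * (z * x⁻¹) := mul_assoc _ _ _
      _ = z * z * (x * x⁻¹) := mul_mul_mul_comm _ _ _ _
      _ = 1 := by rw [hz', mul_inv_cancel, one_mul]
  · simp only [_root_.map_mul, _root_.map_inv, FreeGroup.lift_apply_of, fgen]
    calc z * y * z * y⁻¹ = z * y * (z * y⁻¹) := mul_assoc _ _ _
      _ = z * z * (y * y⁻¹) := mul_mul_mul_comm _ _ _ _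
      _ = 1 := by rw [hz', mul_inv_cancel, one_mul]

/-- forward hom -/
def φAb {M : Type*} [CommGroup M] {x y z : M}
    (hx : x ^ 2 = 1) (hy : y ^ 2 = 1) (hz : z ^ 2 = 1) (hoz : Odd g → z = 1) :
    Abelianization (GC g) →* M :=
  Abelianization.lift (G := GC g) (PresentedGroup.toGroup (lift_rels hx hy hz hoz))

@[simp] lemma φAb_t {M : Type*} [CommGroup M] {x y z : M}
    (hx : x ^ 2 = 1) (hy : y ^ 2 = 1) (hz : z ^ 2 = 1) (hoz : Odd g → z = 1) (i : Fin (g-1)) :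
    φAb hx hy hz hoz (Abelianization.of (GC.t i)) = x := by
  show Abelianization.lift _ (Abelianization.of (GC.t i)) = x
  refine (Abelianization.lift_apply_of (G := GC g) _ _).trans ?_
  exact PresentedGroup.toGroup.of _

@[simp] lemma φAb_s {M : Type*} [CommGroup M] {x y z : M}
    (hx : x ^ 2 = 1) (hy : y ^ 2 = 1) (hz : z ^ 2 = 1) (hoz : Odd g → z = 1) :
    φAb hx hy hz hoz (Abelianization.of (GC.s g)) = y := by
  show Abelianization.lift _ (Abelianization.of (GC.s g)) = y
  refine (Abelianization.lift_apply_of (G := GC g) _ _).trans ?_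
  exact PresentedGroup.toGroup.of _

@[simp] lemma φAb_ρ {M : Type*} [CommGroup M] {x y z : M}
    (hx : x ^ 2 = 1) (hy : y ^ 2 = 1) (hz : z ^ 2 = 1) (hoz : Odd g → z = 1) :
    φAb hx hy hz hoz (Abelianization.of (GC.ρ g)) = z := by
  show Abelianization.lift _ (Abelianization.of (GC.ρ g)) = z
  refine (Abelianization.lift_apply_of (G := GC g) _ _).trans ?_
  exact PresentedGroup.toGroup.of _

end Homs


section Psi

variable {A : Type*} [CommGroup A]

/-- backward hom (two factors) -/
def ψ2 (x y : A) (hx : x ^ 2 = 1) (hy : y ^ 2 = 1) :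
    Multiplicative (ZMod 2 × ZMod 2) →* A :=
  AddMonoidHom.toMultiplicativeLeft ((zmodHom x hx).coprod (zmodHom y hy))

lemma ψ2_apply (x y : A) (hx : x ^ 2 = 1) (hy : y ^ 2 = 1) (p q : ZMod 2) :
    ψ2 x y hx hy (Multiplicative.ofAdd (p, q)) =
      Additive.toMul (zmodHom x hx p) * Additive.toMul (zmodHom y hy q) := by
  simp [ψ2, AddMonoidHom.coprod_apply]

/-- backward hom (three factors) -/
def ψ3 (x y z : A) (hx : x ^ 2 = 1) (hy : y ^ 2 = 1) (hz : z ^ 2 = 1) :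
    Multiplicative (ZMod 2 × ZMod 2 × ZMod 2) →* A :=
  AddMonoidHom.toMultiplicativeLeft ((zmodHom x hx).coprod ((zmodHom y hy).coprod (zmodHom z hz)))

lemma ψ3_apply (x y z : A) (hx : x ^ 2 = 1) (hy : y ^ 2 = 1) (hz : z ^ 2 = 1)
    (p q u : ZMod 2) :
    ψ3 x y z hx hy hz (Multiplicative.ofAdd (p, q, u)) =
      Additive.toMul (zmodHom x hx p) *
        (Additive.toMul (zmodHom y hy q) * Additive.toMul (zmodHom z hz u)) := by
  simp [ψ3, AddMonoidHom.coprod_apply]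

end Psi
end GCaux


/-- `H_1(M^h(N_g)) = ℤ/2 ⊕ ℤ/2` for `g` odd and `ℤ/2 ⊕ ℤ/2 ⊕ ℤ/2` for `g` even;
generated by (the images of) `t_1, s`, resp. `t_1, s, ρ`. -/
theorem stmt3 (g : ℕ) (hg : 3 ≤ g) :
    (Odd g →
      Nonempty (Abelianization (GC g) ≃* Multiplicative (ZMod 2 × ZMod 2)) ∧
      Subgroup.closure
        {Abelianization.of (GC.t (⟨0, by omega⟩ : Fin (g-1))),
         Abelianization.of (GC.s g)} = ⊤) ∧
    (Even g →
      Nonempty (Abelianization (GC g) ≃* Multiplicative (ZMod 2 × ZMod 2 × ZMod 2)) ∧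
      Subgroup.closure
        {Abelianization.of (GC.t (⟨0, by omega⟩ : Fin (g-1))),
         Abelianization.of (GC.s g),
         Abelianization.of (GC.ρ g)} = ⊤) := by
  set a0 : Abelianization (GC g) := Abelianization.of (GC.t (⟨0, by omega⟩ : Fin (g-1)))
    with ha0
  set b0 : Abelianization (GC g) := Abelianization.of (GC.s g) with hb0
  set c0 : Abelianization (GC g) := Abelianization.of (GC.ρ g) with hc0
  have hta : a0 ^ 2 = 1 := GCaux.t_sq _
  have htb : b0 ^ 2 = 1 := GCaux.s_sq
  have htc : c0 ^ 2 = 1 := GCaux.ρ_sq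
  constructor
  · -- odd case
    intro hodd
    have hρ1 : c0 = 1 := GCaux.ρ_one hg hodd
    have hgen : Subgroup.closure {a0, b0} = ⊤ := by
      refine GCaux.gen_aux hg _ (Set.mem_insert _ _) (Set.mem_insert_of_mem _ rfl) ?_
      rw [← hc0, hρ1]; exact one_mem _
    refine ⟨?_, hgen⟩
    have hx : (Multiplicative.ofAdd ((1 : ZMod 2), (0 : ZMod 2))) ^ 2 = 1 := by decide
    have hy : (Multiplicative.ofAdd ((0 : ZMod 2), (1 : ZMod 2))) ^ 2 = 1 := by decide
    have hz : (1 : Multiplicative (ZMod 2 × ZMod 2)) ^ 2 = 1 := one_pow 2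
    have hoz : Odd g → (1 : Multiplicative (ZMod 2 × ZMod 2)) = 1 := fun _ => rfl
    set φ : Abelianization (GC g) →* Multiplicative (ZMod 2 × ZMod 2) :=
      GCaux.φAb hx hy hz hoz with hφ
    set ψ : Multiplicative (ZMod 2 × ZMod 2) →* Abelianization (GC g) :=
      GCaux.ψ2 a0 b0 hta htb with hψ
    have hψ00 : ψ (Multiplicative.ofAdd ((0 : ZMod 2), (0 : ZMod 2))) = 1 := by
      rw [hψ, GCaux.ψ2_apply]; simp
    have hψ10 : ψ (Multiplicative.ofAdd ((1 : ZMod 2), (0 : ZMod 2))) = a0 := by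
      rw [hψ, GCaux.ψ2_apply]; simp
    have hψ01 : ψ (Multiplicative.ofAdd ((0 : ZMod 2), (1 : ZMod 2))) = b0 := by
      rw [hψ, GCaux.ψ2_apply]; simp
    have hψ11 : ψ (Multiplicative.ofAdd ((1 : ZMod 2), (1 : ZMod 2))) = a0 * b0 := by
      rw [hψ, GCaux.ψ2_apply]; simp
    have hL : ψ.comp φ = MonoidHom.id _ := by
      refine MonoidHom.eq_of_eqOn_dense hgen ?_
      rintro u (rfl | rfl)
      · show ψ (φ a0) = a0
        rw [hφ, ha0, GCaux.φAb_t, ← ha0, hψ10]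
      · show ψ (φ b0) = b0
        rw [hφ, hb0, GCaux.φAb_s, ← hb0, hψ01]
    have hR : φ.comp ψ = MonoidHom.id _ := by
      refine MonoidHom.ext fun m => ?_
      obtain ⟨p, q⟩ := m
      have hp : p = 0 ∨ p = 1 := by revert p; decide
      have hq : q = 0 ∨ q = 1 := by revert q; decide
      rcases hp with rfl | rfl <;> rcases hq with rfl | rfl <;>
        refine (MonoidHom.comp_apply φ ψ _).trans ?_
      · show φ (ψ (Multiplicative.ofAdd ((0 : ZMod 2), (0 : ZMod 2)))) = _
        rw [hψ00, map_one]; rfl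
      · show φ (ψ (Multiplicative.ofAdd ((0 : ZMod 2), (1 : ZMod 2)))) = _
        rw [hψ01, hφ, hb0, GCaux.φAb_s]
        rfl
      · show φ (ψ (Multiplicative.ofAdd ((1 : ZMod 2), (0 : ZMod 2)))) = _
        rw [hψ10, hφ, ha0, GCaux.φAb_t]
        rfl
      · show φ (ψ (Multiplicative.ofAdd ((1 : ZMod 2), (1 : ZMod 2)))) = _
        rw [hψ11, map_mul, hφ, ha0, hb0, GCaux.φAb_t, GCaux.φAb_s]
        decide
    exact ⟨MonoidHom.toMulEquiv φ ψ hL hR⟩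
  · -- even case
    intro heven
    have hgen : Subgroup.closure {a0, b0, c0} = ⊤ := by
      refine GCaux.gen_aux hg _ (Set.mem_insert _ _)
        (Set.mem_insert_of_mem _ (Set.mem_insert _ _)) ?_
      exact Subgroup.subset_closure (Set.mem_insert_of_mem _ (Set.mem_insert_of_mem _ rfl))
    refine ⟨?_, hgen⟩
    have hx : (Multiplicative.ofAdd ((1 : ZMod 2), (0 : ZMod 2), (0 : ZMod 2))) ^ 2 = 1 := by
      decide
    have hy : (Multiplicative.ofAdd ((0 : ZMod 2), (1 : ZMod 2), (0 : ZMod 2))) ^ 2 = 1 := by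
      decide
    have hz : (Multiplicative.ofAdd ((0 : ZMod 2), (0 : ZMod 2), (1 : ZMod 2))) ^ 2 = 1 := by
      decide
    have hoz : Odd g → (Multiplicative.ofAdd ((0 : ZMod 2), (0 : ZMod 2), (1 : ZMod 2))) = 1 :=
      fun h => absurd heven (Nat.not_even_iff_odd.mpr h)
    set φ : Abelianization (GC g) →* Multiplicative (ZMod 2 × ZMod 2 × ZMod 2) :=
      GCaux.φAb hx hy hz hoz with hφ
    set ψ : Multiplicative (ZMod 2 × ZMod 2 × ZMod 2) →* Abelianization (GC g) :=
      GCaux.ψ3 a0 b0 c0 hta htb htc with hψ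
    have hψe : ∀ p q u : ZMod 2, ψ (Multiplicative.ofAdd (p, q, u)) =
        Additive.toMul (GCaux.zmodHom a0 hta p) *
          (Additive.toMul (GCaux.zmodHom b0 htb q) *
            Additive.toMul (GCaux.zmodHom c0 htc u)) := fun p q u => by
      rw [hψ, GCaux.ψ3_apply]
    have hL : ψ.comp φ = MonoidHom.id _ := by
      refine MonoidHom.eq_of_eqOn_dense hgen ?_
      rintro u (rfl | rfl | rfl)
      · show ψ (φ a0) = a0
        rw [hφ, ha0, GCaux.φAb_t, ← ha0, hψe]; simp
      · show ψ (φ b0) = b0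
        rw [hφ, hb0, GCaux.φAb_s, ← hb0, hψe]; simp
      · show ψ (φ c0) = c0
        rw [hφ, hc0, GCaux.φAb_ρ, ← hc0, hψe]; simp
    have hR : φ.comp ψ = MonoidHom.id _ := by
      refine MonoidHom.ext fun m => ?_
      obtain ⟨p, q, u⟩ := m
      have hp : p = 0 ∨ p = 1 := by revert p; decide
      have hq : q = 0 ∨ q = 1 := by revert q; decide
      have hu : u = 0 ∨ u = 1 := by revert u; decide
      rcases hp with rfl | rfl <;> rcases hq with rfl | rfl <;> rcases hu with rfl | rfl <;>
        refine (MonoidHom.comp_apply φ ψ _).trans ?_ <;>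
      · rw [show ((_, _, _) : Multiplicative (ZMod 2 × ZMod 2 × ZMod 2)) =
          Multiplicative.ofAdd (_, _, _) from rfl, hψe]
        simp only [GCaux.zmodHom_zero, GCaux.zmodHom_one, toMul_zero, toMul_ofMul,
          one_mul, mul_one, hφ, ha0, hb0, hc0, map_mul, map_one,
          GCaux.φAb_t, GCaux.φAb_s, GCaux.φAb_ρ] <;> decide
    exact ⟨MonoidHom.toMulEquiv φ ψ hL hR⟩
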